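/- For all integers r ≥ 2, k with 1 ≤ k ≤ r−1, and n with 0 ≤ n ≤ r−1−k, the identity Σ_{m=0}^{r−1−k} C(m+k, k) C(r+1, m+k+2) (−1)^{m−n} C(m−1, n) = C(k+n+2, k+2) · ( r(k+2) − k(k+n+2) − n ) / (k+n+2) holds, with the convention C(−1, n) = (−1)^n. -/

import Mathlib

open Finset

/-- Generalized binomial coefficient `C(m-1, n)` with the convention `C(-1, n) = (-1)^n`. -/
def gchooseM1 (m n : ℕ) : ℚ := if m = 0 then (-1) ^ n else ((m - 1).choose n : ℚ)

lemma alt_sum (M : ℕ) (hM : M ≠ 0) :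
    ∑ i ∈ range (M + 1), (-1 : ℚ) ^ i * (M.choose i : ℚ) = 0 := by
  have h := Int.alternating_sum_range_choose_of_ne hM
  have h2 : ((∑ m ∈ range (M + 1), ((-1) ^ m * M.choose m : ℤ) : ℤ) : ℚ) = 0 := by
    rw [h]; norm_num
  push_cast at h2
  convert h2 using 2

lemma lemA (N t : ℕ) (ht : t < N) :
    ∑ j ∈ range (N + 1), (-1 : ℚ) ^ j * ((N.choose j : ℚ) * (j.choose t : ℚ)) = 0 := by
  rw [range_eq_Ico, ← Finset.sum_Ico_consecutive _ (Nat.zero_le t) (by omega : t ≤ N + 1)]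
  have h1 : ∑ j ∈ Finset.Ico 0 t, (-1 : ℚ) ^ j * ((N.choose j : ℚ) * (j.choose t : ℚ)) = 0 := by
    apply Finset.sum_eq_zero
    intro j hj
    rw [Finset.mem_Ico] at hj
    rw [Nat.choose_eq_zero_of_lt hj.2]
    simp
  rw [h1, zero_add, Finset.sum_Ico_eq_sum_range]
  have h2 : ∀ i ∈ range (N + 1 - t),
      (-1 : ℚ) ^ (t + i) * ((N.choose (t + i) : ℚ) * ((t + i).choose t : ℚ)) =
      ((-1 : ℚ) ^ t * (N.choose t : ℚ)) * ((-1 : ℚ) ^ i * ((N - t).choose i : ℚ)) := by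
    intro i hi
    rw [Finset.mem_range] at hi
    have hle : t + i ≤ N := by omega
    have hkey := Nat.choose_mul (n := N) (Nat.le_add_right t i)
    rw [Nat.add_sub_cancel_left] at hkey
    have : ((N.choose (t + i) : ℚ) * ((t + i).choose t : ℚ)) =
        (N.choose t : ℚ) * ((N - t).choose i : ℚ) := by exact_mod_cast hkey
    rw [this, pow_add]; ring
  rw [Finset.sum_congr rfl h2, ← Finset.mul_sum]
  have hNt : N + 1 - t = (N - t) + 1 := by omega
  rw [hNt, alt_sum (N - t) (by omega), mul_zero]

lemma trinom (m k n : ℕ) :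
    ((m + k).choose k : ℚ) * (m.choose n : ℚ) =
    ((k + n).choose k : ℚ) * ((m + k).choose (k + n) : ℚ) := by
  rcases le_or_gt n m with h | h
  · have hkey := Nat.choose_mul (n := m + k) (Nat.le_add_right k n)
    have e1 : m + k - k = m := by omega
    have e2 : k + n - k = n := by omega
    rw [e1, e2] at hkey
    have : ((m + k).choose (k + n) : ℚ) * ((k + n).choose k : ℚ) =
        ((m + k).choose k : ℚ) * (m.choose n : ℚ) := by exact_mod_cast hkey
    linear_combination -this
  · rw [Nat.choose_eq_zero_of_lt h, Nat.choose_eq_zero_of_lt (show m + k < k + n by omega)]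
    push_cast; ring

lemma lemW (r k n : ℕ) (h : k + n ≤ r) :
    ∑ m ∈ range (r + 2 - k),
      (-1 : ℚ) ^ (m + n) * ((m + k).choose k : ℚ) * ((r + 1).choose (m + k) : ℚ) *
        (m.choose n : ℚ) = 0 := by
  have hstep : ∀ m, (-1 : ℚ) ^ (m + n) * ((m + k).choose k : ℚ) * ((r + 1).choose (m + k) : ℚ) *
      (m.choose n : ℚ) =
      ((-1 : ℚ) ^ (n + k) * ((k + n).choose k : ℚ)) *
        ((-1 : ℚ) ^ (k + m) * (((r + 1).choose (k + m) : ℚ) * ((k + m).choose (k + n) : ℚ))) := by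
    intro m
    have := trinom m k n
    have hc : (m + k) = (k + m) := by omega
    rw [hc] at this ⊢
    calc (-1 : ℚ) ^ (m + n) * ((k + m).choose k : ℚ) * ((r + 1).choose (k + m) : ℚ) *
        (m.choose n : ℚ)
        = (-1 : ℚ) ^ (m + n) * ((r + 1).choose (k + m) : ℚ) *
          (((k + m).choose k : ℚ) * (m.choose n : ℚ)) := by ring
      _ = (-1 : ℚ) ^ (m + n) * ((r + 1).choose (k + m) : ℚ) *
          (((k + n).choose k : ℚ) * ((k + m).choose (k + n) : ℚ)) := by rw [this]
      _ = ((-1 : ℚ) ^ (n + k) * ((k + n).choose k : ℚ)) *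
          ((-1 : ℚ) ^ (k + m) * (((r + 1).choose (k + m) : ℚ) * ((k + m).choose (k + n) : ℚ))) := by
          have hsign : (-1 : ℚ) ^ (n + k) * (-1 : ℚ) ^ (k + m) = (-1 : ℚ) ^ (m + n) := by
            rw [← pow_add, show n + k + (k + m) = 2 * k + (m + n) from by omega, pow_add,
              pow_mul]
            norm_num
          rw [← hsign]; ring
  simp only [hstep]
  rw [← Finset.mul_sum]
  have hsum : ∑ m ∈ range (r + 2 - k),
      (-1 : ℚ) ^ (k + m) * (((r + 1).choose (k + m) : ℚ) * ((k + m).choose (k + n) : ℚ)) = 0 := by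
    have e1 : ∑ m ∈ range (r + 2 - k),
        (-1 : ℚ) ^ (k + m) * (((r + 1).choose (k + m) : ℚ) * ((k + m).choose (k + n) : ℚ)) =
        ∑ j ∈ Finset.Ico k (r + 2),
        (-1 : ℚ) ^ j * (((r + 1).choose j : ℚ) * (j.choose (k + n) : ℚ)) := by
      rw [Finset.sum_Ico_eq_sum_range]
    rw [e1]
    have e2 : ∑ j ∈ Finset.Ico 0 k,
        (-1 : ℚ) ^ j * (((r + 1).choose j : ℚ) * (j.choose (k + n) : ℚ)) = 0 := by
      apply Finset.sum_eq_zero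
      intro j hj
      rw [Finset.mem_Ico] at hj
      rw [Nat.choose_eq_zero_of_lt (show j < k + n by omega)]
      simp
    have e3 := Finset.sum_Ico_consecutive
      (f := fun j => (-1 : ℚ) ^ j * (((r + 1).choose j : ℚ) * (j.choose (k + n) : ℚ)))
      (Nat.zero_le k) (show k ≤ r + 2 by omega)
    have e4 := lemA (r + 1) (k + n) (by omega)
    rw [range_eq_Ico, show r + 1 + 1 = r + 2 from by omega, ← e3, e2, zero_add] at e4
    exact e4
  rw [hsum, mul_zero]

lemma gch_zero (m : ℕ) : gchooseM1 m 0 = 1 := by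
  unfold gchooseM1
  cases m <;> simp

lemma gch_succ (m n : ℕ) : gchooseM1 m (n + 1) = (m.choose (n + 1) : ℚ) - gchooseM1 m n := by
  unfold gchooseM1
  cases m with
  | zero => simp [pow_succ]
  | succ m' =>
    simp only [Nat.succ_ne_zero, if_false, Nat.succ_sub_one]
    rw [Nat.choose_succ_succ' m' n]
    push_cast; ring

lemma lemU (r k n : ℕ) (h : k + n ≤ r) :
    ∑ m ∈ range (r + 2 - k),
      (-1 : ℚ) ^ (m + n) * ((m + k).choose k : ℚ) * ((r + 1).choose (m + k) : ℚ) *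
        gchooseM1 m n = 0 := by
  induction n with
  | zero =>
    have := lemW r k 0 (by omega)
    simp only [gch_zero]
    simpa using this
  | succ n ih =>
    have hn' : k + n ≤ r := by omega
    have hsplit : ∀ m ∈ range (r + 2 - k),
        (-1 : ℚ) ^ (m + (n + 1)) * ((m + k).choose k : ℚ) * ((r + 1).choose (m + k) : ℚ) *
          gchooseM1 m (n + 1) =
        (-1 : ℚ) ^ (m + (n + 1)) * ((m + k).choose k : ℚ) * ((r + 1).choose (m + k) : ℚ) *
          (m.choose (n + 1) : ℚ) +
        (-1 : ℚ) ^ (m + n) * ((m + k).choose k : ℚ) * ((r + 1).choose (m + k) : ℚ) *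
          gchooseM1 m n := by
      intro m _
      rw [gch_succ]
      have : (-1 : ℚ) ^ (m + (n + 1)) = -((-1 : ℚ) ^ (m + n)) := by
        rw [show m + (n + 1) = (m + n) + 1 by omega, pow_succ]; ring
      rw [this]; ring
    rw [Finset.sum_congr rfl hsplit, Finset.sum_add_distrib, lemW r k (n + 1) h, ih hn',
      add_zero]

lemma lemT (r k n : ℕ) (h : k + n ≤ r) :
    ∑ m ∈ range (r + 1 - k),
      (-1 : ℚ) ^ (m + n) * ((m + k).choose k : ℚ) * ((r + 1).choose (m + k + 1) : ℚ) *
        gchooseM1 m n = ((k + n + 1).choose (k + 1) : ℚ) := by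
  induction r, h using Nat.le_induction with
  | base =>
    have e : k + n + 1 - k = n + 1 := by omega
    rw [e]
    rw [Finset.sum_eq_single 0]
    · have e0 : gchooseM1 0 n = (-1 : ℚ) ^ n := by unfold gchooseM1; simp
      rw [e0]
      have heven : (-1 : ℚ) ^ n * (-1 : ℚ) ^ n = 1 := by
        rw [← pow_add]; exact Even.neg_one_pow ⟨n, rfl⟩
      simp only [Nat.zero_add, zero_add, Nat.choose_self, Nat.cast_one]
      linear_combination (((k + n + 1).choose (k + 1) : ℚ)) * heven
    · intro b hb hb0
      rw [Finset.mem_range] at hb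
      have : gchooseM1 b n = 0 := by
        unfold gchooseM1
        rw [if_neg hb0, Nat.choose_eq_zero_of_lt (by omega)]
        norm_num
      rw [this, mul_zero]
    · intro habs
      exact absurd (Finset.mem_range.mpr (by omega)) habs
  | succ r hr ih =>
    have e : r + 1 + 1 - k = (r + 1 - k) + 1 := by omega
    have hsplit : ∀ m ∈ range (r + 1 + 1 - k),
        (-1 : ℚ) ^ (m + n) * ((m + k).choose k : ℚ) * ((r + 1 + 1).choose (m + k + 1) : ℚ) *
          gchooseM1 m n =
        (-1 : ℚ) ^ (m + n) * ((m + k).choose k : ℚ) * ((r + 1).choose (m + k) : ℚ) *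
          gchooseM1 m n +
        (-1 : ℚ) ^ (m + n) * ((m + k).choose k : ℚ) * ((r + 1).choose (m + k + 1) : ℚ) *
          gchooseM1 m n := by
      intro m _
      rw [Nat.choose_succ_succ' (r + 1) (m + k)]
      push_cast; ring
    rw [Finset.sum_congr rfl hsplit, Finset.sum_add_distrib]
    have e2 : r + 1 + 1 - k = r + 2 - k := by omega
    rw [e2] at *
    rw [lemU r k n hr, zero_add]
    have e3 : r + 2 - k = (r + 1 - k) + 1 := by omega
    rw [e3, Finset.sum_range_succ]
    have hlast : ((r + 1).choose ((r + 1 - k) + k + 1) : ℚ) = 0 := by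
      rw [Nat.choose_eq_zero_of_lt (by omega)]
      norm_num
    rw [hlast]
    rw [show (-1 : ℚ) ^ (r + 1 - k + n) * (((r + 1 - k) + k).choose k : ℚ) * 0 *
      gchooseM1 (r + 1 - k) n = 0 by ring, add_zero]
    exact ih

lemma lemS (r k n : ℕ) (h : k + n + 1 ≤ r) :
    (∑ m ∈ Finset.range (r - k), ((m + k).choose k : ℚ) * ((r + 1).choose (m + k + 2) : ℚ) *
        (-1 : ℚ) ^ (m + n) * gchooseM1 m n) =
      ((k + n + 2).choose (k + 2) : ℚ) *
        ((r : ℚ) * (k + 2) - k * ((k : ℚ) + n + 2) - n) / ((k : ℚ) + n + 2) := by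
  have hD : ((k : ℚ) + n + 2) ≠ 0 := by positivity
  induction r, h using Nat.le_induction with
  | base =>
    have e : k + n + 1 - k = n + 1 := by omega
    rw [e]
    have hsum : (∑ m ∈ Finset.range (n + 1), ((m + k).choose k : ℚ) *
        ((k + n + 1 + 1).choose (m + k + 2) : ℚ) * (-1 : ℚ) ^ (m + n) * gchooseM1 m n) =
        ((k + n + 2).choose (k + 2) : ℚ) := by
      rw [Finset.sum_eq_single 0]
      · have e0 : gchooseM1 0 n = (-1 : ℚ) ^ n := by unfold gchooseM1; simp
        rw [e0]
        have heven : (-1 : ℚ) ^ n * (-1 : ℚ) ^ n = 1 := by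
          rw [← pow_add]; exact Even.neg_one_pow ⟨n, rfl⟩
        simp only [Nat.zero_add, zero_add, Nat.choose_self, Nat.cast_one,
          show k + n + 1 + 1 = k + n + 2 from by omega]
        linear_combination (((k + n + 2).choose (k + 2) : ℚ)) * heven
      · intro b hb hb0
        rw [Finset.mem_range] at hb
        have : gchooseM1 b n = 0 := by
          unfold gchooseM1
          rw [if_neg hb0, Nat.choose_eq_zero_of_lt (by omega)]
          norm_num
        rw [this, mul_zero]
      · intro habs
        exact absurd (Finset.mem_range.mpr (by omega)) habs
    rw [hsum, eq_div_iff hD]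
    push_cast
    ring
  | succ r hr ih =>
    have hr' : k + n ≤ r := by omega
    have hkr : k ≤ r := by omega
    have hsplit : ∀ m ∈ range (r + 1 - k),
        ((m + k).choose k : ℚ) * ((r + 1 + 1).choose (m + k + 2) : ℚ) *
          (-1 : ℚ) ^ (m + n) * gchooseM1 m n =
        (-1 : ℚ) ^ (m + n) * ((m + k).choose k : ℚ) * ((r + 1).choose (m + k + 1) : ℚ) *
          gchooseM1 m n +
        ((m + k).choose k : ℚ) * ((r + 1).choose (m + k + 2) : ℚ) *
          (-1 : ℚ) ^ (m + n) * gchooseM1 m n := by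
      intro m _
      rw [show m + k + 2 = (m + k + 1) + 1 by omega,
        Nat.choose_succ_succ' (r + 1) (m + k + 1)]
      push_cast; ring
    rw [Finset.sum_congr rfl hsplit, Finset.sum_add_distrib]
    rw [lemT r k n hr']
    have e3 : r + 1 - k = (r - k) + 1 := by omega
    rw [e3, Finset.sum_range_succ]
    have hlast : ((r + 1).choose ((r - k) + k + 2) : ℚ) = 0 := by
      rw [Nat.choose_eq_zero_of_lt (by omega)]
      norm_num
    rw [hlast]
    rw [show (((r - k) + k).choose k : ℚ) * 0 * (-1 : ℚ) ^ (r - k + n) *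
      gchooseM1 (r - k) n = 0 by ring, add_zero]
    rw [ih]
    have key : ((k + n + 2).choose (k + 2) : ℚ) * (k + 2) =
        ((k + n + 1).choose (k + 1) : ℚ) * ((k : ℚ) + n + 2) := by
      have := Nat.add_one_mul_choose_eq (k + n + 1) (k + 1)
      have h2 : (k + n + 1 + 1) * (k + n + 1).choose (k + 1) =
          (k + n + 2).choose (k + 2) * (k + 2) := by
        simpa [Nat.succ_eq_add_one] using this
      have h3 : (((k + n + 1 + 1) * (k + n + 1).choose (k + 1) : ℕ) : ℚ) =
          (((k + n + 2).choose (k + 2) * (k + 2) : ℕ) : ℚ) := by rw [h2]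
      push_cast at h3
      linarith [h3]
    field_simp
    push_cast
    linear_combination -key

theorem sum_identity_two (r k n : ℕ) (hr : 2 ≤ r) (hk1 : 1 ≤ k) (hk : k ≤ r - 1)
    (hn : n ≤ r - 1 - k) :
    (∑ m ∈ Finset.range (r - k), ((m + k).choose k : ℚ) * ((r + 1).choose (m + k + 2) : ℚ) *
        (-1 : ℚ) ^ (m + n) * gchooseM1 m n) =
      ((k + n + 2).choose (k + 2) : ℚ) *
        ((r : ℚ) * (k + 2) - k * ((k : ℚ) + n + 2) - n) / ((k : ℚ) + n + 2) := by
  exact lemS r k n (by omega)
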